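/- For any positive integers a < b with gcd(a, b) = 1 and b ≥ 3, there exists a real θ such that cos aθ + cos bθ ≤ −2 + π²/18. -/

import Mathlib

open Real

lemma key_lemma (a b : ℕ) (hb : 3 ≤ b) (m s t : ℤ) (hm : Odd m)
    (heq : (a : ℤ) * m = b + s + 2 * b * t) (hs : s ^ 2 ≤ 1) :
    ∃ θ : ℝ, cos (a * θ) + cos (b * θ) ≤ -2 + π ^ 2 / 18 := by
  have hb3 : (3 : ℝ) ≤ b := by exact_mod_cast hb
  have hb0 : (0 : ℝ) < b := by linarith
  have hbne : (b : ℝ) ≠ 0 := ne_of_gt hb0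
  refine ⟨m * π / b, ?_⟩
  obtain ⟨k, hk⟩ := hm
  have hcast : (a : ℝ) * m = b + s + 2 * b * t := by exact_mod_cast heq
  have hkR : (m : ℝ) = 2 * k + 1 := by exact_mod_cast hk
  have h1 : (b : ℝ) * ((m : ℝ) * π / b) = (k : ℝ) * (2 * π) + π := by
    field_simp [hkR]; rw [hkR]; ring
  have h2 : (a : ℝ) * ((m : ℝ) * π / b) = (π + s * π / b) + t * (2 * π) := by
    field_simp
    linear_combination hcast
  rw [h1, h2, Real.cos_add_int_mul_two_pi, Real.cos_int_mul_two_pi_add_pi]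
  have h3 : cos (π + s * π / b) = -cos (s * π / b) := by
    rw [Real.cos_add]; simp
  rw [h3]
  have h4 : 1 - ((s : ℝ) * π / b) ^ 2 / 2 ≤ cos ((s : ℝ) * π / b) :=
    Real.one_sub_sq_div_two_le_cos
  have hs' : (s : ℝ) ^ 2 ≤ 1 := by exact_mod_cast hs
  have hπ : (0 : ℝ) < π ^ 2 := by positivity
  have h5 : ((s : ℝ) * π / b) ^ 2 / 2 ≤ π ^ 2 / 18 := by
    rw [div_pow, mul_pow, div_div, div_le_div_iff₀ (by positivity) (by norm_num)]
    have e1 : (0 : ℝ) ≤ (1 - (s : ℝ) ^ 2) * π ^ 2 :=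
      mul_nonneg (by linarith) hπ.le
    have e2 : (0 : ℝ) ≤ ((b : ℝ) ^ 2 - 9) * π ^ 2 :=
      mul_nonneg (by nlinarith) hπ.le
    nlinarith [e1, e2]
  linarith

theorem stmt_7 (a b : ℕ) (ha : 0 < a) (hab : a < b) (hgcd : Nat.gcd a b = 1)
    (hb : 3 ≤ b) :
    ∃ θ : ℝ, cos (a * θ) + cos (b * θ) ≤ -2 + π ^ 2 / 18 := by
  have hcop : Nat.Coprime a b := hgcd
  rcases Nat.even_or_odd a with hae | hao
  · -- a even, hence b odd
    have hbodd : Odd b := by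
      rcases Nat.even_or_odd b with hbe | hbo
      · exfalso
        have h2 : 2 ∣ Nat.gcd a b := Nat.dvd_gcd hae.two_dvd hbe.two_dvd
        rw [hgcd] at h2; norm_num at h2
      · exact hbo
    obtain ⟨a', ha'⟩ := hae.two_dvd
    have hcop' : Nat.Coprime a' b := Nat.Coprime.coprime_dvd_left ⟨2, by omega⟩ hcop
    obtain ⟨u, v, huv⟩ := (Nat.isCoprime_iff_coprime.mpr hcop')
    obtain ⟨c, hc⟩ := hbodd
    have haz : (a : ℤ) = 2 * a' := by exact_mod_cast ha'
    have hbz : (b : ℤ) = 2 * c + 1 := by exact_mod_cast hc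
    have hboddZ : Odd (b : ℤ) := ⟨c, by omega⟩
    have hmain : (a : ℤ) * (u * (c + 1)) = b + 1 + 2 * b * (-(c + 1) * v) := by
      rw [haz]
      linear_combination (2 * (c : ℤ) + 2) * huv - hbz
    rcases Int.even_or_odd (u * ((c : ℤ) + 1)) with hme | hmo
    · have hm' : Odd (u * ((c : ℤ) + 1) + b) := by
        simpa [add_comm] using hboddZ.add_even hme
      refine key_lemma a b hb _ 1 (-(c + 1) * v + a') hm' ?_ (by norm_num)
      rw [mul_add, hmain, haz]; ring
    · exact key_lemma a b hb _ 1 _ hmo hmain (by norm_num)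
  · -- a odd
    have hcop2 : Nat.Coprime a (2 * b) :=
      Nat.Coprime.mul_right (Nat.coprime_two_right.mpr hao) hcop
    obtain ⟨u, v, huv⟩ := (Nat.isCoprime_iff_coprime.mpr hcop2)
    have huv' : (a : ℤ) * u = 1 - 2 * b * v := by
      push_cast at huv; linarith [huv]
    rcases Nat.even_or_odd b with hbe | hbo
    · -- b even, s = 1, m = u*(b+1)
      have hmain : (a : ℤ) * (u * (b + 1)) = b + 1 + 2 * b * (-(b + 1) * v) := by
        linear_combination ((b : ℤ) + 1) * huv'
      have hm : Odd (u * ((b : ℤ) + 1)) := by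
        have hodd : Odd ((a : ℤ) * (u * (b + 1))) := by
          rw [hmain]
          have hb1 : Odd ((b : ℤ) + 1) := by
            obtain ⟨r, hr⟩ := hbe
            exact ⟨r, by push_cast [hr]; ring⟩
          exact hb1.add_even ⟨(b : ℤ) * (-(b + 1) * v), by ring⟩
        exact (Int.odd_mul.mp hodd).2
      exact key_lemma a b hb _ 1 _ hm hmain (by norm_num)
    · -- b odd, s = 0, m = u*b
      have hmain : (a : ℤ) * (u * b) = b + 0 + 2 * b * (-b * v) := by
        linear_combination (b : ℤ) * huv'
      have hm : Odd (u * (b : ℤ)) := by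
        have hodd : Odd ((a : ℤ) * (u * b)) := by
          rw [hmain]
          have hb1 : Odd ((b : ℤ) + 0) := by
            obtain ⟨r, hr⟩ := hbo
            exact ⟨r, by push_cast [hr]; ring⟩
          exact hb1.add_even ⟨(b : ℤ) * (-b * v), by ring⟩
        exact (Int.odd_mul.mp hodd).2
      exact key_lemma a b hb _ 0 _ hm hmain (by norm_num)
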